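/- Let M = (m_{ij}) be a p × q matrix with entries in a commutative ring R, p ≤ q, such that m_{pq} is a unit. Let N be the (p-1) × (q-1) matrix with entries n_{ij} = m_{ij} - m_{pj} m_{iq} m_{pq}^{-1} for 1 ≤ i ≤ p-1, 1 ≤ j ≤ q-1. Then the ideal of R generated by the p × p minors of M equals the ideal generated by the (p-1) × (p-1) minors of N. -/

import Mathlib

open Matrix

/-- If `M` is a `(p+1) × (q+1)` matrix over a commutative ring whose bottom-right entry is a
unit, then the ideal of maximal minors of `M` equals the ideal of maximal minors of the
`p × q` matrix `N` with `n i j = m i j - m (last) j * m i (last) * m (last) (last)⁻¹`. -/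
theorem stmt8 {R : Type*} [CommRing R] (p q : ℕ) (hpq : p ≤ q)
    (M : Matrix (Fin (p + 1)) (Fin (q + 1)) R)
    (hu : IsUnit (M (Fin.last p) (Fin.last q))) :
    Ideal.span { x | ∃ c : Fin (p + 1) ↪ Fin (q + 1), x = (M.submatrix id c).det } =
      Ideal.span { x | ∃ c : Fin p ↪ Fin q, x =
        ((Matrix.of fun (i : Fin p) (j : Fin q) =>
          M i.castSucc j.castSucc -
            M (Fin.last p) j.castSucc * M i.castSucc (Fin.last q) *
              Ring.inverse (M (Fin.last p) (Fin.last q))).submatrix id c).det } := by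
  set u := M (Fin.last p) (Fin.last q) with hu_def
  set v := Ring.inverse u with hv_def
  have hvu : v * u = 1 := Ring.inverse_mul_cancel u hu
  have huv : u * v = 1 := Ring.mul_inverse_cancel u hu
  set N := Matrix.of fun (i : Fin p) (j : Fin q) =>
      M i.castSucc j.castSucc -
        M (Fin.last p) j.castSucc * M i.castSucc (Fin.last q) * v with hN_def
  set E := (1 : Matrix (Fin (p+1)) (Fin (p+1)) R) +
    Matrix.of (fun i k => if k = Fin.last p ∧ i ≠ Fin.last p
      then -(M i (Fin.last q) * v) else 0) with hE_def
  -- E is upper triangular with 1s on the diagonal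
  have hdetE : E.det = 1 := by
    have ht : E.BlockTriangular id := by
      intro i j hij
      have h1 : ¬ i = j := fun h => absurd hij (h ▸ lt_irrefl _)
      have h2 : ¬ j = Fin.last p := by
        rintro rfl; exact absurd hij (not_lt.2 (Fin.le_last i))
      simp [hE_def, Matrix.one_apply, h1, h2]
    rw [Matrix.det_of_upperTriangular ht]
    have : ∀ i, E i i = 1 := by
      intro i; simp [hE_def, Matrix.one_apply]
    simp [this]
  -- entries of E * M
  have hlast : ∀ j, (E * M) (Fin.last p) j = M (Fin.last p) j := by
    intro j
    simp [hE_def, Matrix.add_mul, Matrix.mul_apply, Matrix.one_apply]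
  have hcs : ∀ (i : Fin p) (j : Fin (q+1)), (E * M) i.castSucc j =
      M i.castSucc j - M i.castSucc (Fin.last q) * v * M (Fin.last p) j := by
    intro i j
    have hne : ¬ i.castSucc = Fin.last p := Fin.ne_of_lt i.castSucc_lt_last
    simp [hE_def, Matrix.add_mul, Matrix.mul_apply, hne, Matrix.one_apply,
      add_mul, ite_mul, Finset.sum_add_distrib, sub_eq_add_neg]
  have hcol : ∀ i : Fin p, (E * M) i.castSucc (Fin.last q) = 0 := by
    intro i
    rw [hcs]
    linear_combination (-(M i.castSucc (Fin.last q))) * huv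
  have hNentry : ∀ (i : Fin p) (j : Fin q),
      (E * M) i.castSucc j.castSucc = N i j := by
    intro i j
    rw [hcs]
    simp only [hN_def, Matrix.of_apply]
    ring
  -- determinant of submatrices is unchanged
  have key : ∀ c : Fin (p+1) ↪ Fin (q+1),
      ((E * M).submatrix id c).det = (M.submatrix id c).det := by
    intro c
    have h : (E * M).submatrix id c = E * (M.submatrix id c) := by
      ext i k
      simp [Matrix.mul_apply]
    rw [h, Matrix.det_mul, hdetE, one_mul]
  apply le_antisymm
  · -- maximal minors of M lie in the span of maximal minors of N
    rw [Ideal.span_le]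
    rintro x ⟨c, rfl⟩
    rw [← key c]
    by_cases hc : ∃ j, c j = Fin.last q
    · obtain ⟨j0, hj0⟩ := hc
      rw [Matrix.det_succ_column _ j0]
      refine Ideal.sum_mem _ fun i _ => ?_
      rcases eq_or_ne i (Fin.last p) with rfl | hi
      · have hne : ∀ k : Fin p, c (j0.succAbove k) ≠ Fin.last q := by
          intro k h
          exact (Fin.succAbove_ne j0 k) (c.injective (h.trans hj0.symm))
        have hdinj : Function.Injective
            (fun k : Fin p => (c (j0.succAbove k)).castPred (hne k)) := by
          intro a b hab
          have := congrArg Fin.castSucc hab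
          simp only [Fin.castSucc_castPred] at this
          exact Fin.succAbove_right_injective (c.injective this)
        have h0 : ((E*M).submatrix id c).submatrix
              (Fin.last p).succAbove j0.succAbove
            = N.submatrix id (fun k => (c (j0.succAbove k)).castPred (hne k)) := by
          ext a b
          simp only [Matrix.submatrix_apply, id_eq, Fin.succAbove_last]
          rw [← hNentry a ((c (j0.succAbove b)).castPred (hne b)),
            Fin.castSucc_castPred]
        rw [h0]
        exact Ideal.mul_mem_left _ _ (Ideal.subset_span ⟨⟨_, hdinj⟩, rfl⟩)
      · obtain ⟨i', rfl⟩ := Fin.exists_castSucc_eq.mpr hi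
        have h0 : ((E*M).submatrix id c) i'.castSucc j0 = 0 := by
          simp [hj0, hcol]
        rw [h0, mul_zero, zero_mul]
        exact zero_mem _
    · push_neg at hc
      rw [Matrix.det_succ_row _ (Fin.last p)]
      refine Ideal.sum_mem _ fun j _ => ?_
      have hdinj : Function.Injective
          (fun k : Fin p => (c (j.succAbove k)).castPred (hc _)) := by
        intro a b hab
        have := congrArg Fin.castSucc hab
        simp only [Fin.castSucc_castPred] at this
        exact Fin.succAbove_right_injective (c.injective this)
      have h0 : ((E*M).submatrix id c).submatrix
            (Fin.last p).succAbove j.succAbove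
          = N.submatrix id (fun k => (c (j.succAbove k)).castPred (hc _)) := by
        ext a b
        simp only [Matrix.submatrix_apply, id_eq, Fin.succAbove_last]
        rw [← hNentry a ((c (j.succAbove b)).castPred (hc _)),
          Fin.castSucc_castPred]
      rw [h0]
      exact Ideal.mul_mem_left _ _ (Ideal.subset_span ⟨⟨_, hdinj⟩, rfl⟩)
  · -- maximal minors of N lie in the span of maximal minors of M
    rw [Ideal.span_le]
    rintro x ⟨c, rfl⟩
    set c' : Fin (p+1) ↪ Fin (q+1) :=
      finSuccEquivLast.toEmbedding.trans
        ((c.optionMap).trans finSuccEquivLast.symm.toEmbedding) with hc'_def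
    have hc'1 : c' (Fin.last p) = Fin.last q := by
      simp [hc'_def, Function.Embedding.optionMap, finSuccEquivLast_last]
    have hc'2 : ∀ i : Fin p, c' i.castSucc = (c i).castSucc := by
      intro i
      simp [hc'_def, Function.Embedding.optionMap, finSuccEquivLast_castSucc,
        finSuccEquivLast_symm_some]
    have hx : ((E*M).submatrix id c').det = u * (N.submatrix id c).det := by
      rw [Matrix.det_succ_column _ (Fin.last p)]
      rw [Finset.sum_eq_single (Fin.last p)]
      · have h0 : ((E*M).submatrix id c').submatrix
              (Fin.last p).succAbove (Fin.last p).succAbove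
            = N.submatrix id c := by
          ext a b
          simp only [Matrix.submatrix_apply, id_eq, Fin.succAbove_last]
          rw [hc'2 b, hNentry a (c b)]
        have h1 : ((E*M).submatrix id c') (Fin.last p) (Fin.last p) = u := by
          simp only [Matrix.submatrix_apply, id_eq, hc'1]
          rw [hlast]
        have h2 : ((-1 : R)) ^ ((Fin.last p : ℕ) + (Fin.last p : ℕ)) = 1 :=
          Even.neg_one_pow ⟨p, rfl⟩
        rw [h0, h1, h2, one_mul]
      · intro i _ hi
        obtain ⟨i', rfl⟩ := Fin.exists_castSucc_eq.mpr hi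
        have h0 : ((E*M).submatrix id c') i'.castSucc (Fin.last p) = 0 := by
          simp only [Matrix.submatrix_apply, id_eq, hc'1]
          exact hcol i'
        rw [h0, mul_zero, zero_mul]
      · simp
    have hfin : (N.submatrix id c).det = v * ((M.submatrix id c').det) := by
      rw [← key c', hx, ← mul_assoc, hvu, one_mul]
    rw [hfin]
    exact Ideal.mul_mem_left _ _ (Ideal.subset_span ⟨c', rfl⟩)
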